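/- For all n ≥ 0 and all σ, τ ∈ S_n: σ ≤ τ in the weak Bruhat order if, and only if, Ψ_n(σ) ≤ Ψ_n(τ) in PP(n). Hence Ψ_n is an isomorphism of posets from (S_n, weak Bruhat order) to (PP(n), ≤). -/

import Mathlib

open scoped TensorProduct
open scoped Classical

noncomputable section

/-- A plane poset structure on a set `α`: two partial orders `≤_h` (`hle`) and `≤_r` (`rle`)
such that two distinct elements are comparable for `≤_h` if and only if they are not
comparable for `≤_r`. -/
structure PlanePoset (α : Type) where
  hle : α → α → Prop
  rle : α → α → Prop
  hle_refl : ∀ x, hle x x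
  hle_antisymm : ∀ x y, hle x y → hle y x → x = y
  hle_trans : ∀ x y z, hle x y → hle y z → hle x z
  rle_refl : ∀ x, rle x x
  rle_antisymm : ∀ x y, rle x y → rle y x → x = y
  rle_trans : ∀ x y z, rle x y → rle y z → rle x z
  compat : ∀ x y, x ≠ y → ((hle x y ∨ hle y x) ↔ ¬ (rle x y ∨ rle y x))

namespace PlanePoset

variable {α β : Type}

/-- The induced (total) order `x ≤ y iff x ≤_h y or x ≤_r y`. -/
def tle (P : PlanePoset α) (x y : α) : Prop := P.hle x y ∨ P.rle x y

/-- Transport of a plane poset structure along a bijection. -/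
def map (e : α ≃ β) (P : PlanePoset α) : PlanePoset β where
  hle x y := P.hle (e.symm x) (e.symm y)
  rle x y := P.rle (e.symm x) (e.symm y)
  hle_refl x := P.hle_refl _
  hle_antisymm x y h1 h2 := e.symm.injective (P.hle_antisymm _ _ h1 h2)
  hle_trans x y z h1 h2 := P.hle_trans _ _ _ h1 h2
  rle_refl x := P.rle_refl _
  rle_antisymm x y h1 h2 := e.symm.injective (P.rle_antisymm _ _ h1 h2)
  rle_trans x y z h1 h2 := P.rle_trans _ _ _ h1 h2
  compat x y hxy := P.compat _ _ fun h => hxy (e.symm.injective h)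

@[simp] theorem map_hle (e : α ≃ β) (P : PlanePoset α) (x y : β) :
    (P.map e).hle x y ↔ P.hle (e.symm x) (e.symm y) := Iff.rfl

@[simp] theorem map_rle (e : α ≃ β) (P : PlanePoset α) (x y : β) :
    (P.map e).rle x y ↔ P.rle (e.symm x) (e.symm y) := Iff.rfl

/-- The composition `PQ` of two plane posets: `x ≤_r y` for every `x ∈ P`, `y ∈ Q`. -/
def comp (P : PlanePoset α) (Q : PlanePoset β) : PlanePoset (α ⊕ β) where
  hle x y :=
    match x, y with
    | Sum.inl a, Sum.inl b => P.hle a b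
    | Sum.inr a, Sum.inr b => Q.hle a b
    | _, _ => False
  rle x y :=
    match x, y with
    | Sum.inl a, Sum.inl b => P.rle a b
    | Sum.inr a, Sum.inr b => Q.rle a b
    | Sum.inl _, Sum.inr _ => True
    | Sum.inr _, Sum.inl _ => False
  hle_refl := by
    rintro (a | a)
    · exact P.hle_refl a
    · exact Q.hle_refl a
  hle_antisymm := by
    rintro (a | a) (b | b) h1 h2
    · exact congrArg Sum.inl (P.hle_antisymm a b h1 h2)
    · exact h1.elim
    · exact h1.elim
    · exact congrArg Sum.inr (Q.hle_antisymm a b h1 h2)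
  hle_trans := by
    rintro (a | a) (b | b) (c | c) h1 h2 <;>
      first
        | exact P.hle_trans _ _ _ h1 h2
        | exact Q.hle_trans _ _ _ h1 h2
        | exact h1.elim
        | exact h2.elim
  rle_refl := by
    rintro (a | a)
    · exact P.rle_refl a
    · exact Q.rle_refl a
  rle_antisymm := by
    rintro (a | a) (b | b) h1 h2
    · exact congrArg Sum.inl (P.rle_antisymm a b h1 h2)
    · exact h2.elim
    · exact h1.elim
    · exact congrArg Sum.inr (Q.rle_antisymm a b h1 h2)
  rle_trans := by
    rintro (a | a) (b | b) (c | c) h1 h2 <;>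
      first
        | exact P.rle_trans _ _ _ h1 h2
        | exact Q.rle_trans _ _ _ h1 h2
        | exact h1.elim
        | exact h2.elim
        | trivial
  compat := by
    rintro (a | a) (b | b) hne
    · exact P.compat a b fun h => hne (congrArg Sum.inl h)
    · show (False ∨ False) ↔ ¬ (True ∨ False)
      simp
    · show (False ∨ False) ↔ ¬ (False ∨ True)
      simp
    · exact Q.compat a b fun h => hne (congrArg Sum.inr h)

/-- The product `P ▷ Q` of two plane posets: `x ≤_h y` for every `x ∈ P`, `y ∈ Q`. -/
def hcomp (P : PlanePoset α) (Q : PlanePoset β) : PlanePoset (α ⊕ β) where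
  hle x y :=
    match x, y with
    | Sum.inl a, Sum.inl b => P.hle a b
    | Sum.inr a, Sum.inr b => Q.hle a b
    | Sum.inl _, Sum.inr _ => True
    | Sum.inr _, Sum.inl _ => False
  rle x y :=
    match x, y with
    | Sum.inl a, Sum.inl b => P.rle a b
    | Sum.inr a, Sum.inr b => Q.rle a b
    | _, _ => False
  hle_refl := by
    rintro (a | a)
    · exact P.hle_refl a
    · exact Q.hle_refl a
  hle_antisymm := by
    rintro (a | a) (b | b) h1 h2
    · exact congrArg Sum.inl (P.hle_antisymm a b h1 h2)
    · exact h2.elim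
    · exact h1.elim
    · exact congrArg Sum.inr (Q.hle_antisymm a b h1 h2)
  hle_trans := by
    rintro (a | a) (b | b) (c | c) h1 h2 <;>
      first
        | exact P.hle_trans _ _ _ h1 h2
        | exact Q.hle_trans _ _ _ h1 h2
        | exact h1.elim
        | exact h2.elim
        | trivial
  rle_refl := by
    rintro (a | a)
    · exact P.rle_refl a
    · exact Q.rle_refl a
  rle_antisymm := by
    rintro (a | a) (b | b) h1 h2
    · exact congrArg Sum.inl (P.rle_antisymm a b h1 h2)
    · exact h1.elim
    · exact h1.elim
    · exact congrArg Sum.inr (Q.rle_antisymm a b h1 h2)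
  rle_trans := by
    rintro (a | a) (b | b) (c | c) h1 h2 <;>
      first
        | exact P.rle_trans _ _ _ h1 h2
        | exact Q.rle_trans _ _ _ h1 h2
        | exact h1.elim
        | exact h2.elim
  compat := by
    rintro (a | a) (b | b) hne
    · exact P.compat a b fun h => hne (congrArg Sum.inl h)
    · show (True ∨ False) ↔ ¬ (False ∨ False)
      simp
    · show (False ∨ True) ↔ ¬ (False ∨ False)
      simp
    · exact Q.compat a b fun h => hne (congrArg Sum.inr h)

/-- Restriction of a plane poset to a subset (a plane subposet). -/
def res (P : PlanePoset α) (s : Finset α) : PlanePoset {x : α // x ∈ s} where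
  hle x y := P.hle x.1 y.1
  rle x y := P.rle x.1 y.1
  hle_refl x := P.hle_refl _
  hle_antisymm x y h1 h2 := Subtype.ext (P.hle_antisymm _ _ h1 h2)
  hle_trans x y z h1 h2 := P.hle_trans _ _ _ h1 h2
  rle_refl x := P.rle_refl _
  rle_antisymm x y h1 h2 := Subtype.ext (P.rle_antisymm _ _ h1 h2)
  rle_trans x y z h1 h2 := P.rle_trans _ _ _ h1 h2
  compat x y hxy := P.compat _ _ fun h => hxy (Subtype.ext h)

/-- The involution `ι` exchanging the two partial orders. -/
def swap (P : PlanePoset α) : PlanePoset α where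
  hle := P.rle
  rle := P.hle
  hle_refl := P.rle_refl
  hle_antisymm := P.rle_antisymm
  hle_trans := P.rle_trans
  rle_refl := P.hle_refl
  rle_antisymm := P.hle_antisymm
  rle_trans := P.hle_trans
  compat x y hxy := by
    have h := P.compat x y hxy
    tauto

end PlanePoset

/-- A plane poset structure on `Fin n` is canonical when the induced total order
is the usual order on `{1, …, n}`. -/
def IsCanon {n : ℕ} (P : PlanePoset (Fin n)) : Prop :=
  ∀ x y : Fin n, (P.hle x y ∨ P.rle x y) ↔ x ≤ y

/-- `PP(n)`: (isoclasses of) plane posets of cardinality `n`, realized as the canonical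
plane poset structures on `{1, …, n}`. -/
def CanonPP (n : ℕ) : Type := { P : PlanePoset (Fin n) // IsCanon P }

namespace CanonPP

/-- The empty plane poset, unit of both products. -/
def one : CanonPP 0 :=
  ⟨{ hle := fun _ _ => True
     rle := fun _ _ => True
     hle_refl := fun _ => trivial
     hle_antisymm := fun x => x.elim0
     hle_trans := fun _ _ _ _ _ => trivial
     rle_refl := fun _ => trivial
     rle_antisymm := fun x => x.elim0
     rle_trans := fun _ _ _ _ _ => trivial
     compat := fun x => x.elim0 }, fun x => x.elim0⟩

/-- The composition `PQ` of plane posets, realized canonically. -/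
def comp {k l : ℕ} (P : CanonPP k) (Q : CanonPP l) : CanonPP (k + l) :=
  ⟨(P.1.comp Q.1).map finSumFinEquiv, by
    intro x y
    obtain ⟨a, rfl⟩ := finSumFinEquiv.surjective x
    obtain ⟨b, rfl⟩ := finSumFinEquiv.surjective y
    simp only [PlanePoset.map_hle, PlanePoset.map_rle, Equiv.symm_apply_apply]
    rcases a with a | a <;> rcases b with b | b
    · show (P.1.hle a b ∨ P.1.rle a b) ↔ _
      rw [P.2 a b, finSumFinEquiv_apply_left, finSumFinEquiv_apply_left]
      simp only [Fin.le_def, Fin.coe_castAdd]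
      try omega
    · show (False ∨ True) ↔ _
      rw [finSumFinEquiv_apply_left, finSumFinEquiv_apply_right]
      have ha := a.isLt
      simp only [false_or, true_iff, Fin.le_def, Fin.coe_castAdd, Fin.coe_natAdd]
      omega
    · show (False ∨ False) ↔ _
      rw [finSumFinEquiv_apply_right, finSumFinEquiv_apply_left]
      have hb := b.isLt
      simp only [or_self, false_iff, Fin.le_def, Fin.coe_natAdd, Fin.coe_castAdd]
      omega
    · show (Q.1.hle a b ∨ Q.1.rle a b) ↔ _
      rw [Q.2 a b, finSumFinEquiv_apply_right, finSumFinEquiv_apply_right]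
      simp only [Fin.le_def, Fin.coe_natAdd]
      omega⟩

/-- The product `P ▷ Q` of plane posets, realized canonically. -/
def hcomp {k l : ℕ} (P : CanonPP k) (Q : CanonPP l) : CanonPP (k + l) :=
  ⟨(P.1.hcomp Q.1).map finSumFinEquiv, by
    intro x y
    obtain ⟨a, rfl⟩ := finSumFinEquiv.surjective x
    obtain ⟨b, rfl⟩ := finSumFinEquiv.surjective y
    simp only [PlanePoset.map_hle, PlanePoset.map_rle, Equiv.symm_apply_apply]
    rcases a with a | a <;> rcases b with b | b
    · show (P.1.hle a b ∨ P.1.rle a b) ↔ _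
      rw [P.2 a b, finSumFinEquiv_apply_left, finSumFinEquiv_apply_left]
      simp only [Fin.le_def, Fin.coe_castAdd]
      try omega
    · show (True ∨ False) ↔ _
      rw [finSumFinEquiv_apply_left, finSumFinEquiv_apply_right]
      have ha := a.isLt
      simp only [or_false, true_iff, Fin.le_def, Fin.coe_castAdd, Fin.coe_natAdd]
      omega
    · show (False ∨ False) ↔ _
      rw [finSumFinEquiv_apply_right, finSumFinEquiv_apply_left]
      have hb := b.isLt
      simp only [or_self, false_iff, Fin.le_def, Fin.coe_natAdd, Fin.coe_castAdd]
      omega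
    · show (Q.1.hle a b ∨ Q.1.rle a b) ↔ _
      rw [Q.2 a b, finSumFinEquiv_apply_right, finSumFinEquiv_apply_right]
      simp only [Fin.le_def, Fin.coe_natAdd]
      omega⟩

/-- Restriction of a plane poset to a plane subposet, realized canonically via the unique
increasing bijection. -/
def restrict {n : ℕ} (P : CanonPP n) (s : Finset (Fin n)) : CanonPP s.card :=
  ⟨(P.1.res s).map (s.orderIsoOfFin rfl).toEquiv.symm, by
    intro i j
    simp only [PlanePoset.map_hle, PlanePoset.map_rle, Equiv.symm_symm]
    show (P.1.hle ((s.orderIsoOfFin rfl).toEquiv i).1 ((s.orderIsoOfFin rfl).toEquiv j).1 ∨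
          P.1.rle ((s.orderIsoOfFin rfl).toEquiv i).1 ((s.orderIsoOfFin rfl).toEquiv j).1) ↔ i ≤ j
    rw [P.2]
    rw [Subtype.coe_le_coe]
    exact (s.orderIsoOfFin rfl).le_iff_le⟩

/-- The involution `ι`, on canonical plane posets. -/
def iota {n : ℕ} (P : CanonPP n) : CanonPP n :=
  ⟨P.1.swap, fun x y => by rw [or_comm]; exact P.2 x y⟩

end CanonPP

/-- The partial (weak Bruhat) order on `PP(n)`: `P ≤ Q` iff `x ≤_h y` in `Q` implies
`x ≤_h y` in `P` (the increasing bijection between canonical representatives being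
the identity). -/
def PPle {n : ℕ} (P Q : CanonPP n) : Prop :=
  ∀ x y : Fin n, Q.1.hle x y → P.1.hle x y

/-- Strict version of the order on `PP(n)`. -/
def PPlt {n : ℕ} (P Q : CanonPP n) : Prop := PPle P Q ∧ P ≠ Q

/-- Covering relation of the poset `(PP(n), ≤)`. -/
def PPcovBy {n : ℕ} (P Q : CanonPP n) : Prop :=
  PPlt P Q ∧ ∀ T : CanonPP n, PPlt P T → ¬ PPlt T Q

/-- `E(P) = {(i,j) | i <_h j}`. -/
def Eset {n : ℕ} (P : CanonPP n) : Set (Fin n × Fin n) :=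
  {p | P.1.hle p.1 p.2 ∧ p.1 ≠ p.2}

/-- A biideal of a plane poset: an ideal for both partial orders, equivalently an ideal
for the induced total order. -/
def IsBiideal {n : ℕ} (P : CanonPP n) (I : Finset (Fin n)) : Prop :=
  ∀ x y : Fin n, x ∈ I → (P.1.hle x y ∨ P.1.rle x y) → y ∈ I

/-- `h_s^t = #{(x,y) ∈ s × t | x <_h y}`. -/
def hNum {n : ℕ} (P : CanonPP n) (s t : Finset (Fin n)) : ℕ :=
  ((s ×ˢ t).filter (fun p : Fin n × Fin n => P.1.hle p.1 p.2 ∧ p.1 ≠ p.2)).card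

/-- `φ(P,Q) = #{(x,y) | x <_r y in P and x <_h y in Q} + #{(x,y) | x <_h y in P and
x <_r y in Q}` (via the identity increasing bijection). -/
def phi {n : ℕ} (P Q : CanonPP n) : ℕ :=
  (Finset.univ.filter (fun p : Fin n × Fin n =>
      (P.1.rle p.1 p.2 ∧ p.1 ≠ p.2) ∧ (Q.1.hle p.1 p.2 ∧ p.1 ≠ p.2))).card +
  (Finset.univ.filter (fun p : Fin n × Fin n =>
      (P.1.hle p.1 p.2 ∧ p.1 ≠ p.2) ∧ (Q.1.rle p.1 p.2 ∧ p.1 ≠ p.2))).card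

/-- The level `ℓ(P) = #{(x,y) | x <_r y}`. -/
def level {n : ℕ} (P : CanonPP n) : ℕ :=
  (Finset.univ.filter (fun p : Fin n × Fin n => P.1.rle p.1 p.2 ∧ p.1 ≠ p.2)).card

/-- The plane poset `P_σ = Ψ_n(σ)` associated to a permutation `σ`. -/
def PsiPerm {n : ℕ} (σ : Equiv.Perm (Fin n)) : CanonPP n :=
  ⟨{ hle := fun i j => i ≤ j ∧ σ.symm i ≤ σ.symm j
     rle := fun i j => i ≤ j ∧ σ.symm j ≤ σ.symm i
     hle_refl := fun x => ⟨le_refl x, le_refl _⟩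
     hle_antisymm := fun x y h1 h2 => le_antisymm h1.1 h2.1
     hle_trans := fun x y z h1 h2 => ⟨le_trans h1.1 h2.1, le_trans h1.2 h2.2⟩
     rle_refl := fun x => ⟨le_refl x, le_refl _⟩
     rle_antisymm := fun x y h1 h2 => le_antisymm h1.1 h2.1
     rle_trans := fun x y z h1 h2 => ⟨le_trans h1.1 h2.1, le_trans h2.2 h1.2⟩
     compat := by
       intro x y hxy
       have h1 : (x : ℕ) ≠ (y : ℕ) := fun h => hxy (Fin.ext h)
       have h2 : ((σ.symm x : Fin n) : ℕ) ≠ ((σ.symm y : Fin n) : ℕ) :=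
         fun h => hxy (σ.symm.injective (Fin.ext h))
       simp only [Fin.le_def]
       omega },
   by
     intro x y
     show ((x ≤ y ∧ σ.symm x ≤ σ.symm y) ∨ (x ≤ y ∧ σ.symm y ≤ σ.symm x)) ↔ x ≤ y
     simp only [Fin.le_def]
     omega⟩

/-- One step of the weak Bruhat order: exchange two consecutive letters `i < j`
(`i` appearing immediately before `j`) in the word `σ(1) ⋯ σ(n)`. -/
def bruhatStep {n : ℕ} (σ τ : Equiv.Perm (Fin n)) : Prop :=
  ∃ (i j k : Fin n) (hk : (k : ℕ) + 1 < n),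
    i < j ∧ σ k = i ∧ σ ⟨(k : ℕ) + 1, hk⟩ = j ∧ τ = Equiv.swap i j * σ

/-- The set of (isoclasses of) plane posets. -/
abbrev PPS : Type := Σ n : ℕ, CanonPP n

/-- Composition product on plane posets. -/
def PPS.comp (P Q : PPS) : PPS := ⟨P.1 + Q.1, P.2.comp Q.2⟩

/-- The product `▷` on plane posets. -/
def PPS.hcomp (P Q : PPS) : PPS := ⟨P.1 + Q.1, P.2.hcomp Q.2⟩

/-- Value of the coproduct `Δ_q` on a plane poset:
`Δ_q(P) = Σ_{I biideal of P} q^{h_{P∖I}^I} (P∖I) ⊗ I`. -/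
def deltaOn (K : Type) [Field K] (q : K) {n : ℕ} (P : CanonPP n) :
    (PPS →₀ K) ⊗[K] (PPS →₀ K) :=
  ∑ I ∈ Finset.univ.filter (fun I : Finset (Fin n) => IsBiideal P I),
    q ^ hNum P Iᶜ I •
      (Finsupp.single (⟨Iᶜ.card, P.restrict Iᶜ⟩ : PPS) (1 : K) ⊗ₜ[K]
        Finsupp.single (⟨I.card, P.restrict I⟩ : PPS) (1 : K))

/-- The coproduct `Δ_q` on `h_PP`, extended linearly. -/
def Delta (K : Type) [Field K] (q : K) :
    (PPS →₀ K) →ₗ[K] (PPS →₀ K) ⊗[K] (PPS →₀ K) :=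
  Finsupp.lift _ K PPS fun P => deltaOn K q P.2

/-- The composition product `m`, extended bilinearly to `h_PP`. -/
def mulPP (K : Type) [Field K] : (PPS →₀ K) →ₗ[K] (PPS →₀ K) →ₗ[K] (PPS →₀ K) :=
  Finsupp.lift _ K PPS fun P =>
    Finsupp.lift _ K PPS fun Q => Finsupp.single (PPS.comp P Q) 1

/-- The componentwise product on `h_PP ⊗ h_PP`. -/
def mulT (K : Type) [Field K] :
    ((PPS →₀ K) ⊗[K] (PPS →₀ K)) →ₗ[K] ((PPS →₀ K) ⊗[K] (PPS →₀ K)) →ₗ[K]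
      ((PPS →₀ K) ⊗[K] (PPS →₀ K)) :=
  TensorProduct.map₂ (mulPP K) (mulPP K)

/-- Multiplication of the basis element of a plane poset by `q^{n·c}` where `n` is its
cardinality. -/
def scale (K : Type) [Field K] (q : K) (c : ℕ) : (PPS →₀ K) →ₗ[K] (PPS →₀ K) :=
  Finsupp.lift _ K PPS fun P => q ^ (P.1 * c) • Finsupp.single P 1

/-- Right multiplication by a plane poset for the product `▷`. -/
def rmulH (K : Type) [Field K] (Q : PPS) : (PPS →₀ K) →ₗ[K] (PPS →₀ K) :=
  Finsupp.lift _ K PPS fun P => Finsupp.single (PPS.hcomp P Q) 1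

/-- Left multiplication by a plane poset for the product `▷`. -/
def lmulH (K : Type) [Field K] (P : PPS) : (PPS →₀ K) →ₗ[K] (PPS →₀ K) :=
  Finsupp.lift _ K PPS fun Q => Finsupp.single (PPS.hcomp P Q) 1

/-- The pairing on plane posets of the same cardinality:
`⟨P,Q⟩_q = q^{φ(P,Q)}` if `ι(P) ≤ Q`, and `0` otherwise. -/
def pairN (K : Type) [Field K] (q : K) {n : ℕ} (P Q : CanonPP n) : K :=
  if PPle (CanonPP.iota P) Q then q ^ phi P Q else 0

/-- The pairing `⟨-,-⟩_q` on plane posets (zero on posets of different cardinalities). -/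
def pairPP (K : Type) [Field K] (q : K) (P Q : PPS) : K :=
  if h : P.1 = Q.1 then pairN K q (cast (congrArg CanonPP h) P.2) Q.2 else 0

/-- The pairing `⟨-,-⟩_q`, extended bilinearly to `h_PP`. -/
def Bform (K : Type) [Field K] (q : K) : (PPS →₀ K) →ₗ[K] (PPS →₀ K) →ₗ[K] K :=
  Finsupp.lift _ K PPS fun P => Finsupp.lift K K PPS fun Q => pairPP K q P Q

end


namespace Statement10Aux

open Equiv Finset

variable {n : ℕ}

def invSet (σ : Equiv.Perm (Fin n)) : Finset (Fin n × Fin n) :=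
  Finset.univ.filter (fun p => p.1 < p.2 ∧ σ.symm p.2 < σ.symm p.1)

lemma mem_invSet (σ : Equiv.Perm (Fin n)) (p : Fin n × Fin n) :
    p ∈ invSet σ ↔ p.1 < p.2 ∧ σ.symm p.2 < σ.symm p.1 := by
  simp [invSet]

lemma symm_swap_mul (σ : Equiv.Perm (Fin n)) (i j x : Fin n) :
    (Equiv.swap i j * σ).symm x = σ.symm (Equiv.swap i j x) := rfl

lemma swap_val (i j x : Fin n) :
    ((x : ℕ) = i → Equiv.swap i j x = j) ∧ ((x : ℕ) = j → Equiv.swap i j x = i) ∧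
    ((x : ℕ) ≠ i → (x : ℕ) ≠ j → Equiv.swap i j x = x) := by
  refine ⟨fun h => ?_, fun h => ?_, fun h1 h2 => ?_⟩
  · rw [show x = i from Fin.ext h]; exact Equiv.swap_apply_left i j
  · rw [show x = j from Fin.ext h]; exact Equiv.swap_apply_right i j
  · exact Equiv.swap_apply_of_ne_of_ne (fun h => h1 (congrArg Fin.val h))
      (fun h => h2 (congrArg Fin.val h))

lemma symm_inj_val (σ : Equiv.Perm (Fin n)) (x y : Fin n) :
    (σ.symm x : ℕ) = (σ.symm y : ℕ) ↔ (x : ℕ) = (y : ℕ) := by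
  constructor
  · intro h; exact congrArg Fin.val (σ.symm.injective (Fin.ext h))
  · intro h; rw [Fin.ext h]

lemma invSet_swap_mul (σ : Equiv.Perm (Fin n)) (i j : Fin n) (hij : i < j)
    (hadj : (σ.symm j : ℕ) = (σ.symm i : ℕ) + 1) :
    invSet (Equiv.swap i j * σ) = insert (i, j) (invSet σ) ∧ (i, j) ∉ invSet σ := by
  have hijn : (i : ℕ) < (j : ℕ) := hij
  constructor
  · ext ⟨a, b⟩
    rw [mem_invSet, Finset.mem_insert, mem_invSet, symm_swap_mul, symm_swap_mul, Prod.ext_iff]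
    obtain ⟨ha1, ha2, ha3⟩ := swap_val i j a
    obtain ⟨hb1, hb2, hb3⟩ := swap_val i j b
    have hA1 : (a : ℕ) = i → (σ.symm (Equiv.swap i j a) : ℕ) = σ.symm j := fun h => by rw [ha1 h]
    have hA2 : (a : ℕ) = j → (σ.symm (Equiv.swap i j a) : ℕ) = σ.symm i := fun h => by rw [ha2 h]
    have hA3 : (a : ℕ) ≠ i → (a : ℕ) ≠ j → (σ.symm (Equiv.swap i j a) : ℕ) = σ.symm a :=
      fun h1 h2 => by rw [ha3 h1 h2]
    have hB1 : (b : ℕ) = i → (σ.symm (Equiv.swap i j b) : ℕ) = σ.symm j := fun h => by rw [hb1 h]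
    have hB2 : (b : ℕ) = j → (σ.symm (Equiv.swap i j b) : ℕ) = σ.symm i := fun h => by rw [hb2 h]
    have hB3 : (b : ℕ) ≠ i → (b : ℕ) ≠ j → (σ.symm (Equiv.swap i j b) : ℕ) = σ.symm b :=
      fun h1 h2 => by rw [hb3 h1 h2]
    have hai := symm_inj_val σ a i
    have haj := symm_inj_val σ a j
    have hbi := symm_inj_val σ b i
    have hbj := symm_inj_val σ b j
    simp only [Fin.lt_def, Fin.ext_iff]
    omega
  · rw [mem_invSet]
    rintro ⟨-, h⟩
    have h2 : (σ.symm j : ℕ) < σ.symm i := h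
    omega

lemma pple_iff (σ τ : Equiv.Perm (Fin n)) :
    PPle (PsiPerm σ) (PsiPerm τ) ↔ invSet σ ⊆ invSet τ := by
  constructor
  · intro h p hp
    rw [mem_invSet] at hp ⊢
    obtain ⟨h1, h2⟩ := hp
    refine ⟨h1, ?_⟩
    by_contra hc
    push_neg at hc
    have h3 : (PsiPerm σ).1.hle p.1 p.2 := h p.1 p.2 ⟨h1.le, hc⟩
    exact absurd h3.2 (not_le.mpr h2)
  · intro h x y hxy
    obtain ⟨hxy1, hxy2⟩ := hxy
    refine ⟨hxy1, ?_⟩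
    rcases eq_or_lt_of_le hxy1 with heq | hlt
    · subst heq; exact le_refl _
    · by_contra hc
      push_neg at hc
      have hm : (x, y) ∈ invSet σ := (mem_invSet σ _).mpr ⟨hlt, hc⟩
      have h2 := ((mem_invSet τ _).mp (h hm)).2
      exact absurd hxy2 (not_le.mpr h2)

lemma step_subset {σ τ : Equiv.Perm (Fin n)} (h : bruhatStep σ τ) :
    invSet σ ⊆ invSet τ := by
  obtain ⟨i, j, k, hk, hij, hσk, hσk1, rfl⟩ := h
  have h1 : σ.symm i = k := by rw [← hσk, Equiv.symm_apply_apply]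
  have h2 : σ.symm j = ⟨(k : ℕ) + 1, hk⟩ := by rw [← hσk1, Equiv.symm_apply_apply]
  have hadj : (σ.symm j : ℕ) = (σ.symm i : ℕ) + 1 := by rw [h1, h2]
  rw [(invSet_swap_mul σ i j hij hadj).1]
  exact Finset.subset_insert _ _

lemma eq_of_invSet_eq {σ τ : Equiv.Perm (Fin n)} (h : invSet σ = invSet τ) : σ = τ := by
  have key : ∀ x y : Fin n, σ.symm x < σ.symm y ↔ τ.symm x < τ.symm y := by
    intro x y
    rcases lt_trichotomy x y with hxy | hxy | hxy
    · constructor <;> intro hh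
      · by_contra hc
        push_neg at hc
        rcases eq_or_lt_of_le hc with he | hl
        · exact absurd (τ.symm.injective he.symm) (ne_of_lt hxy)
        · have hm : (x, y) ∈ invSet τ := (mem_invSet τ _).mpr ⟨hxy, hl⟩
          rw [← h, mem_invSet] at hm
          exact absurd hh (not_lt.mpr hm.2.le)
      · by_contra hc
        push_neg at hc
        rcases eq_or_lt_of_le hc with he | hl
        · exact absurd (σ.symm.injective he.symm) (ne_of_lt hxy)
        · have hm : (x, y) ∈ invSet σ := (mem_invSet σ _).mpr ⟨hxy, hl⟩
          rw [h, mem_invSet] at hm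
          exact absurd hh (not_lt.mpr hm.2.le)
    · subst hxy; simp
    · constructor <;> intro hh
      · have hm : (y, x) ∈ invSet σ := (mem_invSet σ _).mpr ⟨hxy, hh⟩
        rw [h, mem_invSet] at hm
        exact hm.2
      · have hm : (y, x) ∈ invSet τ := (mem_invSet τ _).mpr ⟨hxy, hh⟩
        rw [← h, mem_invSet] at hm
        exact hm.2
  have hsm : StrictMono (fun x => σ.symm (τ x)) := by
    intro x y hxy
    have : τ.symm (τ x) < τ.symm (τ y) := by
      rw [Equiv.symm_apply_apply, Equiv.symm_apply_apply]; exact hxy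
    exact (key (τ x) (τ y)).mpr this
  have hrange : Set.range (fun x => σ.symm (τ x)) = Set.range (id : Fin n → Fin n) := by
    rw [Set.range_id]
    exact Set.range_eq_univ.mpr (σ.symm.surjective.comp τ.surjective)
  have hwf : WellFoundedLT (Fin n) := inferInstance
  have hid : (fun x => σ.symm (τ x)) = id :=
    (StrictMono.range_inj (β := Fin n) (γ := Fin n) hsm (strictMono_id (α := Fin n))).mp hrange
  apply Equiv.ext
  intro x
  have h1 := congrFun hid x
  simp only [id] at h1
  have h2 := congrArg σ h1
  rw [Equiv.apply_symm_apply] at h2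
  exact h2.symm

lemma reach_of_subset : ∀ (m : ℕ) (σ τ : Equiv.Perm (Fin n)),
    (invSet τ \ invSet σ).card = m → invSet σ ⊆ invSet τ →
    Relation.ReflTransGen bruhatStep σ τ := by
  intro m
  induction m using Nat.strong_induction_on with
  | _ m ih =>
    intro σ τ hcard hsub
    by_cases hD : invSet τ \ invSet σ = ∅
    · have : invSet τ ⊆ invSet σ := by
        intro p hp
        by_contra hc
        exact (Finset.notMem_empty p) (hD ▸ Finset.mem_sdiff.mpr ⟨hp, hc⟩)
      have heq : invSet σ = invSet τ := Finset.Subset.antisymm hsub this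
      rw [eq_of_invSet_eq heq]
    · obtain ⟨p, hpD, hpmin⟩ := Finset.exists_min_image (invSet τ \ invSet σ)
        (fun q => (σ.symm q.2 : ℕ) - (σ.symm q.1 : ℕ))
        (Finset.nonempty_iff_ne_empty.mpr hD)
      obtain ⟨hpτ, hpσ⟩ := Finset.mem_sdiff.mp hpD
      obtain ⟨a, b⟩ := p
      obtain ⟨hab, hτab⟩ := (mem_invSet τ _).mp hpτ
      rw [mem_invSet] at hpσ
      push_neg at hpσ
      dsimp only at hab hτab hpσ
      have habn : (a : ℕ) < b := hab
      have hτabn : (τ.symm b : ℕ) < τ.symm a := hτab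
      have hσab : (σ.symm a : ℕ) < σ.symm b := by
        have h1 := hpσ hab
        rw [Fin.le_def] at h1
        have h2 : (σ.symm a : ℕ) ≠ σ.symm b :=
          fun hh => absurd ((symm_inj_val σ a b).mp hh) (by omega)
        omega
      -- minimality implies adjacency
      have hadj : (σ.symm b : ℕ) = (σ.symm a : ℕ) + 1 := by
        by_contra hgap
        have hgap2 : (σ.symm a : ℕ) + 2 ≤ σ.symm b := by omega
        have hm' : (σ.symm a : ℕ) + 1 < n := lt_of_le_of_lt (by omega) (σ.symm b).isLt
        set c := σ ⟨(σ.symm a : ℕ) + 1, hm'⟩ with hc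
        have hsc : (σ.symm c : ℕ) = (σ.symm a : ℕ) + 1 := by
          rw [hc, Equiv.symm_apply_apply]
        have hca : (c : ℕ) ≠ a := by
          intro hh
          have := (symm_inj_val σ c a).mpr hh
          omega
        have hcb : (c : ℕ) ≠ b := by
          intro hh
          have := (symm_inj_val σ c b).mpr hh
          omega
        -- helper: pairs not inverted by σ that become inverted by τ are in D
        have hnotτ : ∀ x y : Fin n, x < y → (σ.symm x : ℕ) < σ.symm y →
            (σ.symm y : ℕ) - (σ.symm x : ℕ) < (σ.symm b : ℕ) - (σ.symm a : ℕ) →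
            (τ.symm x : ℕ) < τ.symm y := by
          intro x y hxy hσxy hlt
          by_contra hcon
          push_neg at hcon
          have hne : (τ.symm x : ℕ) ≠ τ.symm y :=
            fun hh => absurd ((symm_inj_val τ x y).mp hh) (Nat.ne_of_lt hxy)
          have hinv : τ.symm y < τ.symm x := Fin.lt_def.mpr (by omega)
          have hmem : (x, y) ∈ invSet τ \ invSet σ := by
            rw [Finset.mem_sdiff, mem_invSet, mem_invSet]
            refine ⟨⟨hxy, hinv⟩, ?_⟩
            rintro ⟨-, hh⟩
            dsimp only at hh
            rw [Fin.lt_def] at hh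
            omega
          have := hpmin (x, y) hmem
          simp only at this
          omega
        have hinvτ : ∀ x y : Fin n, x < y → (σ.symm y : ℕ) < σ.symm x →
            (τ.symm y : ℕ) < τ.symm x := by
          intro x y hxy hσxy
          have : (x, y) ∈ invSet σ := (mem_invSet σ _).mpr ⟨hxy, hσxy⟩
          exact ((mem_invSet τ _).mp (hsub this)).2
        rcases lt_or_gt_of_ne (show (c:ℕ) ≠ a from hca) with hc1 | hc1
        · -- c < a < b
          have h1 : (τ.symm a : ℕ) < τ.symm c := hinvτ c a (Fin.lt_def.mpr hc1) (by omega)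
          have h2 : (τ.symm c : ℕ) < τ.symm b :=
            hnotτ c b (Fin.lt_def.mpr (by omega)) (by omega) (by omega)
          omega
        · rcases lt_or_gt_of_ne (show (c:ℕ) ≠ b from hcb) with hc2 | hc2
          · -- a < c < b
            have h1 : (τ.symm a : ℕ) < τ.symm c :=
              hnotτ a c (Fin.lt_def.mpr hc1) (by omega) (by omega)
            have h2 : (τ.symm c : ℕ) < τ.symm b :=
              hnotτ c b (Fin.lt_def.mpr hc2) (by omega) (by omega)
            omega
          · -- a < b < c
            have h1 : (τ.symm c : ℕ) < τ.symm b := hinvτ b c (Fin.lt_def.mpr hc2) (by omega)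
            have h2 : (τ.symm a : ℕ) < τ.symm c :=
              hnotτ a c (Fin.lt_def.mpr (by omega)) (by omega) (by omega)
            omega
      -- build the step
      have hk : ((σ.symm a : Fin n) : ℕ) + 1 < n := by
        rw [← hadj]; exact (σ.symm b).isLt
      have hstep : bruhatStep σ (Equiv.swap a b * σ) := by
        refine ⟨a, b, σ.symm a, hk, hab, Equiv.apply_symm_apply σ a, ?_, rfl⟩
        have : (⟨((σ.symm a : Fin n) : ℕ) + 1, hk⟩ : Fin n) = σ.symm b := by
          apply Fin.ext; simp [hadj]
        rw [this, Equiv.apply_symm_apply]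
      obtain ⟨hset, hnotmem⟩ := invSet_swap_mul σ a b hab hadj
      have hsub' : invSet (Equiv.swap a b * σ) ⊆ invSet τ := by
        rw [hset]
        intro q hq
        rcases Finset.mem_insert.mp hq with rfl | hq2
        · exact hpτ
        · exact hsub hq2
      have hcard' : (invSet τ \ invSet (Equiv.swap a b * σ)).card < m := by
        rw [hset, Finset.sdiff_insert]
        have hmem : (a, b) ∈ invSet τ \ invSet σ := hpD
        calc ((invSet τ \ invSet σ).erase (a, b)).card
            < (invSet τ \ invSet σ).card := Finset.card_erase_lt_of_mem hmem
          _ = m := hcard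
      exact Relation.ReflTransGen.head hstep
        (ih _ hcard' (Equiv.swap a b * σ) τ rfl hsub')

end Statement10Aux

/-- For all `n ≥ 0` and all `σ, τ ∈ S_n`: `σ ≤ τ` for the weak Bruhat
order (the order generated by exchanges of consecutive letters `i < j`, `i` immediately
before `j`) if and only if `Ψ_n(σ) ≤ Ψ_n(τ)` in `PP(n)`; hence `Ψ_n` is an isomorphism of
posets. -/
theorem statement10 (n : ℕ) (σ τ : Equiv.Perm (Fin n)) :
    Relation.ReflTransGen bruhatStep σ τ ↔ PPle (PsiPerm σ) (PsiPerm τ) := by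
  rw [Statement10Aux.pple_iff]
  constructor
  · intro h
    induction h with
    | refl => exact Finset.Subset.refl _
    | tail _ hstep ih => exact ih.trans (Statement10Aux.step_subset hstep)
  · intro h
    exact Statement10Aux.reach_of_subset _ σ τ rfl h
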